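/- For every fixed n ≥ 1 and γ ≥ 0 there exist constants c, C > 0 such that the recursively defined sweep-cover enumeration function satisfies P_{Δ,γ}(n) ≤ C · Δ^c · c^Δ for all Δ ≥ 2; that is, with n and γ held constant, P_{Δ,γ}(n) = O(Δ^c · c^Δ) as Δ → ∞. -/

import Mathlib

/-- `Lfun P m i` is the sum, over all ordered `i`-tuples `(k_1, …, k_i)` of positive
integers with `k_1 + ⋯ + k_i = m`, of `∏ j, P (k j)` (an empty sum is `0`). -/
def Lfun (P : ℕ → ℕ) (m i : ℕ) : ℕ :=
  ∑ k ∈ (Finset.Nat.antidiagonalTuple i m).filter (fun k => ∀ j, 0 < k j),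
    ∏ j, P (k j)

/-- `Rnum n m` is the number of set partitions of an `n`-element set into exactly `m`
blocks, each of size at least `2`. -/
noncomputable def Rnum (n m : ℕ) : ℕ :=
  Set.ncard {P : Finset (Finset (Fin n)) |
    P.card = m ∧ (∀ B ∈ P, 2 ≤ B.card) ∧ ∀ x : Fin n, ∃! B, B ∈ P ∧ x ∈ B}

/-- `P` is the recursively defined sweep-cover enumeration function `P_{Δ,γ}`:
`P 1 = γ + 1` and for `n ≥ 2`,
`P n = ∑_{l=1}^{Δ-2} (Δ choose l) ∑_{r=1}^{Δ-l} L(n-r, l) R(Δ-l, r) + L(n, Δ) + R(Δ, n)`. -/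
def IsSweepEnum (Δ γ : ℕ) (P : ℕ → ℕ) : Prop :=
  P 1 = γ + 1 ∧
  ∀ n, 2 ≤ n →
    P n = (∑ l ∈ Finset.Icc 1 (Δ - 2), Nat.choose Δ l *
             ∑ r ∈ Finset.Icc 1 (Δ - l), Lfun P (n - r) l * Rnum (Δ - l) r)
          + Lfun P n Δ + Rnum Δ n

/-- For every fixed `n ≥ 1` and `γ ≥ 0` there are constants `c, C > 0` with
`P_{Δ,γ}(n) ≤ C * Δ ^ c * c ^ Δ` for all `Δ ≥ 2`; i.e. `P_{Δ,γ}(n) = O(Δ^c · c^Δ)` as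
`Δ → ∞` with `n` and `γ` held constant. -/
lemma Lfun_filter_empty {m i : ℕ} (h : m < i) :
    (Finset.Nat.antidiagonalTuple i m).filter (fun k => ∀ j, 0 < k j) = ∅ := by
  rw [Finset.filter_eq_empty_iff]
  intro k hk hpos
  rw [Finset.Nat.mem_antidiagonalTuple] at hk
  have h1 : (i : ℕ) = ∑ _j : Fin i, 1 := by simp
  have h2 : ∑ _j : Fin i, 1 ≤ ∑ j : Fin i, k j :=
    Finset.sum_le_sum (fun j _ => hpos j)
  omega

lemma Lfun_eq_zero {P : ℕ → ℕ} {m i : ℕ} (h : m < i) : Lfun P m i = 0 := by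
  unfold Lfun; rw [Lfun_filter_empty h, Finset.sum_empty]

lemma card_filter_tuple_le (m i : ℕ) :
    ((Finset.Nat.antidiagonalTuple i m).filter (fun k => ∀ j, 0 < k j)).card ≤ (m+1)^m := by
  rcases lt_or_ge m i with h | h
  · rw [Lfun_filter_empty h]; simp
  · have key : ((Finset.Nat.antidiagonalTuple i m).filter (fun k => ∀ j, 0 < k j)).card
        ≤ (Finset.univ : Finset (Fin i → Fin (m+1))).card := by
      apply Finset.card_le_card_of_injOn
        (fun (k : Fin i → ℕ) (j : Fin i) => (⟨min (k j) m, by omega⟩ : Fin (m+1)))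
      · intro a _; exact Finset.mem_univ _
      · intro k1 h1 k2 h2 heq
        simp only [Finset.coe_filter, Set.mem_setOf_eq, Finset.mem_filter,
          Finset.Nat.mem_antidiagonalTuple] at h1 h2
        have hb1 : ∀ j, k1 j ≤ m := fun j =>
          le_of_le_of_eq (Finset.single_le_sum (fun _ _ => Nat.zero_le _) (Finset.mem_univ j)) h1.1
        have hb2 : ∀ j, k2 j ≤ m := fun j =>
          le_of_le_of_eq (Finset.single_le_sum (fun _ _ => Nat.zero_le _) (Finset.mem_univ j)) h2.1
        funext j
        have := congrFun heq j
        simp only [Fin.mk.injEq] at this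
        have e1 := hb1 j; have e2 := hb2 j
        omega
    refine key.trans ?_
    have : (Finset.univ : Finset (Fin i → Fin (m+1))).card = (m+1)^i := by
      simp
    rw [this]
    exact Nat.pow_le_pow_right (Nat.succ_pos m) h

lemma choose_le_two_pow (n k : ℕ) : n.choose k ≤ 2 ^ n := by
  rcases le_or_gt k n with h | h
  · calc n.choose k ≤ ∑ m ∈ Finset.range (n+1), n.choose m :=
        Finset.single_le_sum (fun _ _ => Nat.zero_le _) (Finset.mem_range.mpr (by omega))
      _ = 2 ^ n := Nat.sum_range_choose n
  · rw [Nat.choose_eq_zero_of_lt h]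
    exact Nat.zero_le _

lemma Lfun_le {P : ℕ → ℕ} {C X K m i : ℕ} (hC : 1 ≤ C) (hX : 1 ≤ X)
    (hP : ∀ j, 1 ≤ j → j < K → P j ≤ C * X ^ j)
    (hm : m < K ∨ (m ≤ K ∧ 2 ≤ i)) :
    Lfun P m i ≤ (m+1)^m * (C ^ m * X ^ m) := by
  unfold Lfun
  have hterm : ∀ k ∈ (Finset.Nat.antidiagonalTuple i m).filter (fun k => ∀ j, 0 < k j),
      ∏ j, P (k j) ≤ C ^ m * X ^ m := by
    intro k hk
    simp only [Finset.mem_filter, Finset.Nat.mem_antidiagonalTuple] at hk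
    obtain ⟨hsum, hpos⟩ := hk
    have hle : ∀ j, k j ≤ m := fun j =>
      le_of_le_of_eq (Finset.single_le_sum (fun _ _ => Nat.zero_le _) (Finset.mem_univ j)) hsum
    have him : i ≤ m := by
      have h1 : (i : ℕ) = ∑ _j : Fin i, 1 := by simp
      have h2 : ∑ _j : Fin i, 1 ≤ ∑ j : Fin i, k j :=
        Finset.sum_le_sum (fun j _ => hpos j)
      omega
    have hpart : ∀ j, k j < K := by
      intro j
      rcases hm with h | ⟨h1, h2⟩
      · exact lt_of_le_of_lt (hle j) h
      · haveI : Nontrivial (Fin i) := Fin.nontrivial_iff_two_le.mpr h2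
        obtain ⟨j', hj'⟩ := exists_ne j
        have hsub : ({j, j'} : Finset (Fin i)).sum k ≤ m := by
          rw [← hsum]
          exact Finset.sum_le_sum_of_subset (Finset.subset_univ _)
        rw [Finset.sum_pair (Ne.symm hj')] at hsub
        have := hpos j'
        omega
    calc ∏ j, P (k j) ≤ ∏ j : Fin i, (C * X ^ (k j)) :=
          Finset.prod_le_prod' (fun j _ => hP (k j) (hpos j) (hpart j))
      _ = C ^ i * X ^ m := by
          rw [Finset.prod_mul_distrib, Finset.prod_const, Finset.prod_pow_eq_pow_sum, hsum]
          simp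
      _ ≤ C ^ m * X ^ m := Nat.mul_le_mul_right _ (Nat.pow_le_pow_right hC him)
  calc (∑ k ∈ (Finset.Nat.antidiagonalTuple i m).filter (fun k => ∀ j, 0 < k j), ∏ j, P (k j))
      ≤ ((Finset.Nat.antidiagonalTuple i m).filter (fun k => ∀ j, 0 < k j)).card • (C ^ m * X ^ m) :=
        Finset.sum_le_card_nsmul _ _ _ hterm
    _ = ((Finset.Nat.antidiagonalTuple i m).filter (fun k => ∀ j, 0 < k j)).card * (C ^ m * X ^ m) :=
        smul_eq_mul _ _
    _ ≤ (m+1)^m * (C ^ m * X ^ m) := Nat.mul_le_mul_right _ (card_filter_tuple_le m i)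

noncomputable def blkAux (a : ℕ) (P : Finset (Finset (Fin a))) (x : Fin a) : Finset (Fin a) :=
  if h : ∃ B, B ∈ P ∧ x ∈ B then h.choose else ∅

lemma blkAux_spec {a : ℕ} {P : Finset (Finset (Fin a))} {x : Fin a}
    (h : ∃ B, B ∈ P ∧ x ∈ B) : blkAux a P x ∈ P ∧ x ∈ blkAux a P x := by
  rw [blkAux, dif_pos h]
  exact h.choose_spec

noncomputable def Faux (a r : ℕ) (P : Finset (Finset (Fin a))) (x : Fin a) : Option (Fin r) :=
  if h : blkAux a P x ∈ P ∧ P.card = r then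
    some (Fin.cast h.2 (P.equivFin ⟨blkAux a P x, h.1⟩)) else none

lemma Rnum_le (a r : ℕ) : Rnum a r ≤ (r+1)^a := by
  classical
  unfold Rnum
  set S : Set (Finset (Finset (Fin a))) := {P : Finset (Finset (Fin a)) |
    P.card = r ∧ (∀ B ∈ P, 2 ≤ B.card) ∧ ∀ x : Fin a, ∃! B, B ∈ P ∧ x ∈ B} with hSdef
  have hmem : ∀ P ∈ S, ∀ x : Fin a, blkAux a P x ∈ P ∧ x ∈ blkAux a P x := by
    intro P hP x
    exact blkAux_spec (hP.2.2 x).exists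
  have huniq : ∀ P ∈ S, ∀ (x : Fin a) (B : Finset (Fin a)), B ∈ P → x ∈ B →
      B = blkAux a P x := by
    intro P hP x B hB hx
    exact (hP.2.2 x).unique ⟨hB, hx⟩ ⟨(hmem P hP x).1, (hmem P hP x).2⟩
  have Feq : ∀ P ∈ S, ∀ x y : Fin a,
      (Faux a r P x = Faux a r P y ↔ blkAux a P x = blkAux a P y) := by
    intro P hP x y
    have hx := (hmem P hP x).1
    have hy := (hmem P hP y).1
    rw [Faux, Faux, dif_pos (⟨hx, hP.1⟩ : _ ∧ _), dif_pos (⟨hy, hP.1⟩ : _ ∧ _)]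
    constructor
    · intro h
      have h2 := Option.some.inj h
      have h3 : (P.equivFin ⟨blkAux a P x, hx⟩ : Fin P.card)
          = P.equivFin ⟨blkAux a P y, hy⟩ := by
        apply Fin.ext
        have := congrArg Fin.val h2
        simpa using this
      have h4 := P.equivFin.injective h3
      exact congrArg Subtype.val h4
    · intro h
      have h5 : (⟨blkAux a P x, hx⟩ : {B // B ∈ P}) = ⟨blkAux a P y, hy⟩ := Subtype.ext h
      rw [h5]
  have hinj : Set.InjOn (Faux a r) S := by
    intro P hP Q hQ hfeq
    have Heq : ∀ x y : Fin a,
        (blkAux a P x = blkAux a P y ↔ blkAux a Q x = blkAux a Q y) := by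
      intro x y
      rw [← Feq P hP x y, ← Feq Q hQ x y, show Faux a r P = Faux a r Q from hfeq]
    have hsub : ∀ P' Q', P' ∈ S → Q' ∈ S →
        (∀ x y : Fin a, (blkAux a P' x = blkAux a P' y ↔ blkAux a Q' x = blkAux a Q' y)) →
        P' ⊆ Q' := by
      intro P' Q' hP' hQ' hiff B hB
      have hBne : B.Nonempty := Finset.card_pos.mp (by have := hP'.2.1 B hB; omega)
      obtain ⟨x, hxB⟩ := hBne
      have hBblk : B = blkAux a P' x := huniq P' hP' x B hB hxB
      have hkey : B = blkAux a Q' x := by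
        rw [hBblk]
        ext y
        constructor
        · intro hy
          have h1 : blkAux a P' x = blkAux a P' y :=
            huniq P' hP' y (blkAux a P' x) (hmem P' hP' x).1 hy
          have h2 : blkAux a Q' x = blkAux a Q' y := (hiff x y).mp h1
          have h3 := (hmem Q' hQ' y).2
          rwa [← h2] at h3
        · intro hy
          have h1 : blkAux a Q' x = blkAux a Q' y :=
            huniq Q' hQ' y (blkAux a Q' x) (hmem Q' hQ' x).1 hy
          have h2 : blkAux a P' x = blkAux a P' y := (hiff x y).mpr h1
          have h3 := (hmem P' hP' y).2
          rwa [← h2] at h3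
      rw [hkey]
      exact (hmem Q' hQ' x).1
    exact Finset.Subset.antisymm (hsub P Q hP hQ Heq)
      (hsub Q P hQ hP (fun x y => (Heq x y).symm))
  have hle := Set.ncard_le_ncard_of_injOn (Faux a r)
    (fun p _ => Set.mem_univ (Faux a r p)) hinj Set.finite_univ
  refine hle.trans ?_
  rw [Set.ncard_univ]
  simp [Nat.card_eq_fintype_card]

lemma key_bound (γ N : ℕ) (k : ℕ) : ∃ C : ℕ, γ + 1 ≤ C ∧
    ∀ j, 1 ≤ j → j ≤ k → j ≤ N → ∀ Δ : ℕ, 2 ≤ Δ → ∀ P : ℕ → ℕ, IsSweepEnum Δ γ P →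
      P j ≤ C * (Δ ^ N * (2 * (N + 1)) ^ Δ) ^ j := by
  induction k with
  | zero => exact ⟨γ + 1, le_refl _, fun j hj1 hj0 => by omega⟩
  | succ k ih =>
    obtain ⟨C, hCγ, hC⟩ := ih
    have hC1 : 1 ≤ C := by omega
    refine ⟨2 * ((k+2)^(k+1) * C^(k+1)) + C + 1, le_trans hCγ
      (le_trans (Nat.le_add_left C _) (Nat.le_succ _)), ?_⟩
    intro j hj1 hjk hjN Δ hΔ P hP
    obtain ⟨X, hXdef⟩ : ∃ X : ℕ, X = Δ ^ N * (2 * (N + 1)) ^ Δ := ⟨_, rfl⟩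
    rw [← hXdef]
    have hX1 : 1 ≤ X := by
      rw [hXdef]
      exact Nat.mul_pos (pow_pos (by omega : 0 < Δ) N)
        (pow_pos (by omega : 0 < 2 * (N + 1)) Δ)
    rcases Nat.lt_or_ge j (k+1) with hlt | hge
    · -- use induction hypothesis directly
      have h := hC j hj1 (by omega) hjN Δ hΔ P hP
      rw [← hXdef] at h
      exact h.trans (Nat.mul_le_mul_right _
        (le_trans (Nat.le_add_left C _) (Nat.le_succ _)))
    · have hj : j = k + 1 := by omega
      subst hj
      rcases Nat.eq_zero_or_pos k with hk0 | hkpos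
      · -- j = 1
        subst hk0
        rw [hP.1]
        have hg : γ + 1 ≤ 2*((0+2)^(0+1)*C^(0+1))+C+1 := by
          have h2 : (0+2)^(0+1)*C^(0+1) = 2*C := by ring
          rw [h2]; omega
        calc γ + 1 ≤ 2*((0+2)^(0+1)*C^(0+1))+C+1 := hg
          _ ≤ (2*((0+2)^(0+1)*C^(0+1))+C+1) * X ^ (0+1) :=
            Nat.le_mul_of_pos_right _ (pow_pos (by omega) _)
      · -- j = k+1 ≥ 2 : use the recursion
        obtain ⟨D, hDdef⟩ : ∃ D : ℕ, D = (k+2)^(k+1) * C^(k+1) := ⟨_, rfl⟩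
        have hCoef : 2 * ((k+2)^(k+1) * C^(k+1)) + C + 1 = 2 * D + C + 1 := by
          rw [hDdef]
        rw [hCoef, hP.2 (k+1) (by omega)]
        have hD1 : 1 ≤ D := by
          rw [hDdef]
          exact Nat.mul_pos (pow_pos (by omega) _) (pow_pos (by omega) _)
        have hPrev : ∀ j', 1 ≤ j' → j' < k+1 → P j' ≤ C * X ^ j' := by
          intro j' h1 h2
          have h := hC j' h1 (by omega) (by omega) Δ hΔ P hP
          rwa [← hXdef] at h
        have hLf : ∀ m i, m ≤ k + 1 → (m < k+1 ∨ 2 ≤ i) → Lfun P m i ≤ D * X ^ m := by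
          intro m i hm hcase
          have h := Lfun_le hC1 hX1 hPrev (K := k+1) (m := m) (i := i)
            (hcase.imp id (fun h2 => ⟨hm, h2⟩))
          refine h.trans ?_
          rw [← mul_assoc, hDdef]
          apply Nat.mul_le_mul_right
          apply Nat.mul_le_mul
          · calc (m+1)^m ≤ (k+2)^m := Nat.pow_le_pow_left (by omega) m
              _ ≤ (k+2)^(k+1) := Nat.pow_le_pow_right (by omega) (by omega)
          · exact Nat.pow_le_pow_right hC1 hm
        have hN2 : 2 ≤ N := by omega
        -- inner sums
        have hInner : ∀ l ∈ Finset.Icc 1 (Δ - 2),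
            (∑ r ∈ Finset.Icc 1 (Δ - l), Lfun P (k+1 - r) l * Rnum (Δ - l) r)
              ≤ Δ * (D * X ^ k * (N+1) ^ Δ) := by
          intro l hl
          simp only [Finset.mem_Icc] at hl
          have hterm : ∀ r ∈ Finset.Icc 1 (Δ - l),
              Lfun P (k+1-r) l * Rnum (Δ - l) r ≤ D * X ^ k * (N+1) ^ Δ := by
            intro r hr
            simp only [Finset.mem_Icc] at hr
            rcases Nat.lt_or_ge r (k+1) with hrk | hrk
            · have hL : Lfun P (k+1-r) l ≤ D * X ^ (k+1-r) :=
                hLf (k+1-r) l (by omega) (Or.inl (by omega))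
              have hL2 : D * X^(k+1-r) ≤ D * X ^ k :=
                Nat.mul_le_mul_left _ (Nat.pow_le_pow_right hX1 (by omega))
              have hR : Rnum (Δ - l) r ≤ (r+1)^(Δ - l) := Rnum_le _ _
              have hR2 : (r+1)^(Δ-l) ≤ (N+1)^Δ := by
                calc (r+1)^(Δ-l) ≤ (N+1)^(Δ-l) := Nat.pow_le_pow_left (by omega) _
                  _ ≤ (N+1)^Δ := Nat.pow_le_pow_right (by omega) (by omega)
              exact Nat.mul_le_mul (hL.trans hL2) (hR.trans hR2)
            · have hz : Lfun P (k+1-r) l = 0 := Lfun_eq_zero (by omega)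
              rw [hz, zero_mul]
              exact Nat.zero_le _
          calc (∑ r ∈ Finset.Icc 1 (Δ - l), Lfun P (k+1 - r) l * Rnum (Δ - l) r)
              ≤ (Finset.Icc 1 (Δ - l)).card • (D * X ^ k * (N+1) ^ Δ) :=
                Finset.sum_le_card_nsmul _ _ _ hterm
            _ = (Δ - l + 1 - 1) * (D * X ^ k * (N+1) ^ Δ) := by
                rw [Nat.card_Icc, smul_eq_mul]
            _ ≤ Δ * (D * X ^ k * (N+1) ^ Δ) := Nat.mul_le_mul_right _ (by omega)
        have hOuter : (∑ l ∈ Finset.Icc 1 (Δ-2), Nat.choose Δ l *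
              ∑ r ∈ Finset.Icc 1 (Δ - l), Lfun P (k+1-r) l * Rnum (Δ-l) r)
            ≤ Δ * (2^Δ * (Δ * (D * X ^ k * (N+1) ^ Δ))) := by
          have hterm : ∀ l ∈ Finset.Icc 1 (Δ-2), Nat.choose Δ l *
              (∑ r ∈ Finset.Icc 1 (Δ - l), Lfun P (k+1-r) l * Rnum (Δ-l) r)
              ≤ 2^Δ * (Δ * (D * X ^ k * (N+1) ^ Δ)) :=
            fun l hl => Nat.mul_le_mul (choose_le_two_pow Δ l) (hInner l hl)
          calc (∑ l ∈ Finset.Icc 1 (Δ-2), Nat.choose Δ l *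
              ∑ r ∈ Finset.Icc 1 (Δ - l), Lfun P (k+1-r) l * Rnum (Δ-l) r)
              ≤ (Finset.Icc 1 (Δ-2)).card • (2^Δ * (Δ * (D * X ^ k * (N+1) ^ Δ))) :=
                Finset.sum_le_card_nsmul _ _ _ hterm
            _ = (Δ - 2 + 1 - 1) * (2^Δ * (Δ * (D * X ^ k * (N+1) ^ Δ))) := by
                rw [Nat.card_Icc, smul_eq_mul]
            _ ≤ Δ * (2^Δ * (Δ * (D * X ^ k * (N+1) ^ Δ))) :=
                Nat.mul_le_mul_right _ (by omega)
        have hOuter2 : Δ * (2^Δ * (Δ * (D * X ^ k * (N+1) ^ Δ))) ≤ D * X ^ (k+1) := by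
          have e2 : Δ^2 * (2^Δ * (N+1)^Δ) ≤ X := by
            rw [hXdef, ← mul_pow]
            exact Nat.mul_le_mul (Nat.pow_le_pow_right (by omega) hN2) (le_refl _)
          calc Δ * (2^Δ * (Δ * (D * X ^ k * (N+1) ^ Δ)))
              = D * X^k * (Δ^2 * (2^Δ * (N+1)^Δ)) := by ring
            _ ≤ D * X^k * X := Nat.mul_le_mul_left _ e2
            _ = D * X^(k+1) := by ring
        have hMid : Lfun P (k+1) Δ ≤ D * X^(k+1) := hLf (k+1) Δ le_rfl (Or.inr hΔ)
        have hLast : Rnum Δ (k+1) ≤ X ^ (k+1) := by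
          calc Rnum Δ (k+1) ≤ (k+1+1)^Δ := Rnum_le _ _
            _ ≤ (2*(N+1))^Δ := Nat.pow_le_pow_left (by omega) _
            _ ≤ X := by
                rw [hXdef]
                exact Nat.le_mul_of_pos_left _ (pow_pos (by omega) N)
            _ ≤ X ^ (k+1) := by
                calc X = X^1 := (pow_one X).symm
                  _ ≤ X^(k+1) := Nat.pow_le_pow_right hX1 (by omega)
        calc (∑ l ∈ Finset.Icc 1 (Δ-2), Nat.choose Δ l *
              ∑ r ∈ Finset.Icc 1 (Δ - l), Lfun P (k+1-r) l * Rnum (Δ-l) r)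
              + Lfun P (k+1) Δ + Rnum Δ (k+1)
            ≤ D * X ^ (k+1) + D * X^(k+1) + X^(k+1) :=
              add_le_add (add_le_add (hOuter.trans hOuter2) hMid) hLast
          _ = (2 * D + 1) * X^(k+1) := by ring
          _ ≤ (2 * D + C + 1) * X^(k+1) := Nat.mul_le_mul_right _ (by omega)

theorem sweepEnum_upper_bound_in_Delta (n γ : ℕ) (hn : 1 ≤ n) :
    ∃ c C : ℝ, 0 < c ∧ 0 < C ∧
      ∀ Δ : ℕ, 2 ≤ Δ → ∀ P : ℕ → ℕ, IsSweepEnum Δ γ P →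
        (P n : ℝ) ≤ C * (Δ : ℝ) ^ c * c ^ Δ := by
  obtain ⟨C, hCγ, hC⟩ := key_bound γ n n
  refine ⟨((n*n + (2*(n+1))^n : ℕ) : ℝ), (C : ℝ), ?_, ?_, ?_⟩
  · have h0 : 0 < n*n + (2*(n+1))^n := by positivity
    exact_mod_cast h0
  · have h0 : 0 < C := by omega
    exact_mod_cast h0
  · intro Δ hΔ P hP
    have h := hC n hn le_rfl le_rfl Δ hΔ P hP
    have h2 : (P n : ℝ) ≤ (C:ℝ) * ((Δ:ℝ) ^ (n*n) * (((2*(n+1):ℕ):ℝ) ^ n) ^ Δ) := by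
      calc (P n : ℝ) ≤ ((C * (Δ ^ n * (2 * (n + 1)) ^ Δ) ^ n : ℕ) : ℝ) := by
            exact_mod_cast h
        _ = (C:ℝ) * ((Δ:ℝ) ^ (n*n) * (((2*(n+1):ℕ):ℝ) ^ n) ^ Δ) := by
            push_cast
            ring
    refine h2.trans ?_
    rw [mul_assoc]
    have hΔ1 : (1:ℝ) ≤ (Δ:ℝ) := by exact_mod_cast (by omega : 1 ≤ Δ)
    apply mul_le_mul_of_nonneg_left ?_ (by positivity)
    have hA1 : (Δ:ℝ) ^ (n*n) ≤ (Δ:ℝ) ^ (((n*n + (2*(n+1))^n : ℕ) : ℝ)) := by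
      rw [show (Δ:ℝ) ^ (n*n) = (Δ:ℝ) ^ (((n*n : ℕ)) : ℝ) from (Real.rpow_natCast _ _).symm]
      apply Real.rpow_le_rpow_of_exponent_le hΔ1
      exact_mod_cast Nat.le_add_right (n*n) _
    have hA2 : (((2*(n+1):ℕ):ℝ) ^ n) ^ Δ ≤ ((n*n + (2*(n+1))^n : ℕ) : ℝ) ^ Δ := by
      apply pow_le_pow_left₀ (by positivity)
      exact_mod_cast Nat.le_add_left _ _
    exact mul_le_mul hA1 hA2 (by positivity) (by positivity)
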